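/- There exists a constant c_T > 0 depending only on T > 0 such that for all real a, b (not both zero), κ(T,b) := tanh(T·√(a²+b²)) / (√(a²+b²) - a·tanh(T·√(a²+b²))) satisfies κ(T,b) > c_T / (1 + |a| + |b|). -/
import Mathlib

private lemma tanh_pos' {x : ℝ} (hx : 0 < x) : 0 < Real.tanh x := by
  rw [Real.tanh_eq_sinh_div_cosh]
  exact div_pos (Real.sinh_pos_iff.2 hx) (Real.cosh_pos x)

private lemma tanh_lt_one' (x : ℝ) : Real.tanh x < 1 := by
  rw [Real.tanh_eq_sinh_div_cosh, div_lt_one (Real.cosh_pos x)]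
  exact Real.sinh_lt_cosh x

private lemma tanh_mono' {x y : ℝ} (h : x ≤ y) : Real.tanh x ≤ Real.tanh y := by
  rw [Real.tanh_eq_sinh_div_cosh, Real.tanh_eq_sinh_div_cosh,
    div_le_div_iff₀ (Real.cosh_pos x) (Real.cosh_pos y)]
  have h0 : (0:ℝ) ≤ Real.sinh (y - x) := Real.sinh_nonneg_iff.2 (by linarith)
  rw [Real.sinh_sub] at h0
  nlinarith [Real.cosh_pos x, Real.cosh_pos y]

private lemma tanh_ge {T x : ℝ} (hT : 0 < T) (hx : 0 ≤ x) (hxT : x ≤ T) :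
    x * Real.exp (-T) ≤ Real.tanh x := by
  rw [Real.tanh_eq_sinh_div_cosh, le_div_iff₀ (Real.cosh_pos x)]
  have h1 : x ≤ Real.sinh x := Real.self_le_sinh_iff.2 hx
  have h2 : Real.cosh x ≤ Real.exp T := by
    rw [Real.cosh_eq]
    have e1 : Real.exp x ≤ Real.exp T := Real.exp_le_exp.2 hxT
    have e2 : Real.exp (-x) ≤ Real.exp T := Real.exp_le_exp.2 (by linarith)
    linarith
  have h3 : 0 < Real.exp (-T) := Real.exp_pos _
  have h4 : Real.exp (-T) * Real.exp T = 1 := by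
    rw [← Real.exp_add]; simp
  nlinarith [mul_le_mul_of_nonneg_left h2 (mul_nonneg hx h3.le)]

theorem riccati_kappa_lower_bound (T : ℝ) (hT : 0 < T) :
    ∃ c : ℝ, 0 < c ∧ ∀ a b : ℝ, ¬(a = 0 ∧ b = 0) →
      Real.tanh (T * Real.sqrt (a ^ 2 + b ^ 2)) /
          (Real.sqrt (a ^ 2 + b ^ 2) - a * Real.tanh (T * Real.sqrt (a ^ 2 + b ^ 2)))
        > c / (1 + |a| + |b|) := by
  have hc1 : 0 < Real.tanh T := tanh_pos' hT
  have hc2 : 0 < T * Real.exp (-T) := mul_pos hT (Real.exp_pos _)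
  refine ⟨min (Real.tanh T) (T * Real.exp (-T)) / 2, by positivity, ?_⟩
  intro a b hab
  set c : ℝ := min (Real.tanh T) (T * Real.exp (-T)) / 2 with hc
  have hcpos : 0 < c := by positivity
  have hsum : 0 < a ^ 2 + b ^ 2 := by
    rcases not_and_or.1 hab with h | h
    · positivity
    · positivity
  set r : ℝ := Real.sqrt (a ^ 2 + b ^ 2) with hrdef
  have hr : 0 < r := Real.sqrt_pos.2 hsum
  set t : ℝ := Real.tanh (T * r) with htdef
  have ht0 : 0 < t := tanh_pos' (by positivity)
  have ht1 : t < 1 := tanh_lt_one' _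
  have har : |a| ≤ r := by
    rw [hrdef, ← Real.sqrt_sq_eq_abs]
    exact Real.sqrt_le_sqrt (by nlinarith)
  have hrab : r ≤ |a| + |b| := by
    rw [hrdef]
    have : Real.sqrt (a ^ 2 + b ^ 2) ≤ Real.sqrt ((|a| + |b|) ^ 2) := by
      apply Real.sqrt_le_sqrt
      have := abs_nonneg a; have := abs_nonneg b
      nlinarith [sq_abs a, sq_abs b]
    simpa [Real.sqrt_sq (by positivity : (0:ℝ) ≤ |a| + |b|)] using this
  have habs : 0 < 1 + |a| + |b| := by
    have := abs_nonneg a; have := abs_nonneg b; linarith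
  -- denominator bounds
  have hd1 : 0 < r - a * t := by
    have : a * t ≤ |a| * t := mul_le_mul_of_nonneg_right (le_abs_self a) ht0.le
    nlinarith
  have hd2 : r - a * t < 2 * r := by
    have : -(a * t) ≤ |a| * t := by
      calc -(a*t) ≤ |-(a*t)| := le_abs_self _
        _ = |a| * |t| := by rw [abs_neg, abs_mul]
        _ = |a| * t := by rw [abs_of_pos ht0]
    nlinarith
  have step1 : t / (2 * r) < t / (r - a * t) :=
    div_lt_div_of_pos_left ht0 hd1 hd2
  have step2 : c / (1 + |a| + |b|) ≤ t / (2 * r) := by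
    rw [div_le_div_iff₀ habs (by linarith)]
    rcases le_or_gt 1 r with h1 | h1
    · have htT : Real.tanh T ≤ t := tanh_mono' (by nlinarith)
      have hcle : c ≤ Real.tanh T / 2 := by
        rw [hc]; gcongr; exact min_le_left _ _
      nlinarith
    · have hlow : T * r * Real.exp (-T) ≤ t := by
        have := tanh_ge hT (by positivity : (0:ℝ) ≤ T * r) (by nlinarith)
        linarith [this]
      have hcle : c ≤ T * Real.exp (-T) / 2 := by
        rw [hc]; gcongr; exact min_le_right _ _
      have := abs_nonneg a; have := abs_nonneg b
      nlinarith [Real.exp_pos (-T)]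
  exact lt_of_le_of_lt step2 step1
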